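/- Let Σ be a symmetric p×p matrix with eigenvalues λ₁ ≥ ... ≥ λ_p and λ_k > λ_{k+1}, and let Π = Σ_{i=1}^k u_i u_iᵀ be the projector onto the top-k eigenspace. Then for every matrix X in the Fantope F^k, (1/2)‖Π − X‖_F² ≤ ⟨Σ, Π − X⟩ / (λ_k − λ_{k+1}). -/

import Mathlib

open Matrix BigOperators Finset

noncomputable def fip {p : ℕ} (A B : Matrix (Fin p) (Fin p) ℝ) : ℝ := (Aᵀ * B).trace

noncomputable def fnorm {p : ℕ} (A : Matrix (Fin p) (Fin p) ℝ) : ℝ :=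
  Real.sqrt (∑ i, ∑ j, (A i j) ^ 2)

def Fantope {p : ℕ} (k : ℕ) (X : Matrix (Fin p) (Fin p) ℝ) : Prop :=
  X.IsSymm ∧ X.PosSemidef ∧ (1 - X).PosSemidef ∧ X.trace = (k : ℝ)

/-- The orthogonal projector onto the span of the top-`k` eigenvectors. -/
def topProj {p : ℕ} (k : ℕ) (u : Fin p → Fin p → ℝ) : Matrix (Fin p) (Fin p) ℝ :=
  ∑ i ∈ Finset.univ.filter (fun i : Fin p => (i : ℕ) < k), vecMulVec (u i) (u i)

lemma tr_vvM {p : ℕ} (v : Fin p → ℝ) (M : Matrix (Fin p) (Fin p) ℝ) :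
    (vecMulVec v v * M).trace = v ⬝ᵥ (M *ᵥ v) := by
  simp only [Matrix.trace, Matrix.diag, Matrix.mul_apply, vecMulVec_apply, dotProduct,
    Matrix.mulVec, Finset.mul_sum]
  rw [Finset.sum_comm]
  exact Finset.sum_congr rfl fun a _ => Finset.sum_congr rfl fun b _ => by ring

lemma vvt_mulVec {p : ℕ} (w v x : Fin p → ℝ) :
    (vecMulVec w v) *ᵥ x = (v ⬝ᵥ x) • w := by
  ext a
  simp [Matrix.mulVec, vecMulVec_apply, dotProduct, Finset.mul_sum, mul_comm, mul_left_comm]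

lemma vvt_transpose {p : ℕ} (v : Fin p → ℝ) : (vecMulVec v v)ᵀ = vecMulVec v v := by
  ext a b; simp [vecMulVec_apply, mul_comm]

lemma dot_sum' {p : ℕ} {ι : Type*} (s : Finset ι) (v : Fin p → ℝ) (w : ι → Fin p → ℝ) :
    v ⬝ᵥ (∑ j ∈ s, w j) = ∑ j ∈ s, v ⬝ᵥ w j := by
  simp only [dotProduct, Finset.sum_apply, Finset.mul_sum]
  rw [Finset.sum_comm]

lemma sum_mulVec' {p : ℕ} {ι : Type*} (s : Finset ι) (f : ι → Matrix (Fin p) (Fin p) ℝ)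
    (v : Fin p → ℝ) : (∑ j ∈ s, f j) *ᵥ v = ∑ j ∈ s, f j *ᵥ v := by
  ext a
  simp only [Matrix.mulVec, dotProduct, Matrix.sum_apply, Finset.sum_mul, Finset.sum_apply]
  rw [Finset.sum_comm]

lemma psd_trace_nonneg {p : ℕ} {M : Matrix (Fin p) (Fin p) ℝ} (h : M.PosSemidef) :
    0 ≤ M.trace := by
  rw [Matrix.trace]
  refine Finset.sum_nonneg fun i _ => ?_
  have := h.dotProduct_mulVec_nonneg (Pi.single i 1)
  simpa [dotProduct, Matrix.mulVec, Pi.single_apply] using this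

lemma complete_sum {p : ℕ} (u : Fin p → Fin p → ℝ)
    (horth : ∀ i j, u i ⬝ᵥ u j = if i = j then (1 : ℝ) else 0) :
    ∑ i, vecMulVec (u i) (u i) = (1 : Matrix (Fin p) (Fin p) ℝ) := by
  set U : Matrix (Fin p) (Fin p) ℝ := Matrix.of u with hU
  have h1 : U * Uᵀ = 1 := by
    ext i j
    simpa [Matrix.mul_apply, Matrix.one_apply, dotProduct, hU] using horth i j
  have h2 : Uᵀ * U = 1 := mul_eq_one_comm.mp h1
  rw [← h2]
  ext a b
  simp [Matrix.sum_apply, Matrix.mul_apply, vecMulVec_apply, hU, mul_comm]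

lemma card_T {p k : ℕ} (hkp : k < p) :
    ((Finset.univ.filter (fun i : Fin p => (i : ℕ) < k)).card) = k := by
  have : (Finset.univ.filter (fun i : Fin p => (i : ℕ) < k)) =
      (Finset.univ : Finset (Fin k)).map ⟨Fin.castLE hkp.le, Fin.castLE_injective _⟩ := by
    ext i
    simp only [Finset.mem_filter, Finset.mem_univ, true_and, Finset.mem_map,
      Function.Embedding.coeFn_mk]
    constructor
    · intro h; exact ⟨⟨i, h⟩, by simp [Fin.castLE, Fin.ext_iff]⟩
    · rintro ⟨j, rfl⟩; exact j.2
  rw [this]; simp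

open scoped MatrixOrder in
lemma trXX_le {p : ℕ} {X : Matrix (Fin p) (Fin p) ℝ} (hX : X.PosSemidef)
    (h1X : ((1 : Matrix (Fin p) (Fin p) ℝ) - X).PosSemidef) :
    (X * X).trace ≤ X.trace := by
  have hS := (CFC.sqrt_nonneg X).posSemidef
  have hsq : CFC.sqrt X * CFC.sqrt X = X := by
    have := CFC.sq_sqrt X hX.nonneg; rwa [pow_two] at this
  have hpsd : ((CFC.sqrt X)ᴴ * (1 - X) * CFC.sqrt X).PosSemidef :=
    h1X.conjTranspose_mul_mul_same _
  have htr : ((CFC.sqrt X)ᴴ * (1 - X) * CFC.sqrt X).trace = X.trace - (X * X).trace := by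
    have hH : (CFC.sqrt X)ᴴ = CFC.sqrt X := hS.1
    rw [hH, Matrix.trace_mul_comm, ← Matrix.mul_assoc, hsq, Matrix.mul_sub, Matrix.mul_one,
      Matrix.trace_sub]
  have h0 := psd_trace_nonneg hpsd
  rw [htr] at h0; linarith

/-- curvature lemma.  If λ_k > λ_{k+1} and Π = ∑_{i≤k} u_i u_iᵀ is the
projector onto the top-k eigenspace, then for every X in the Fantope,
(1/2)‖Π − X‖_F² ≤ ⟨Σ, Π − X⟩ / (λ_k − λ_{k+1}). -/
theorem fantope_curvature (p k : ℕ) (hk : 0 < k) (hkp : k < p)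
    (Sig : Matrix (Fin p) (Fin p) ℝ) (l : Fin p → ℝ) (u : Fin p → Fin p → ℝ)
    (hdecomp : Sig = ∑ i, l i • vecMulVec (u i) (u i))
    (horth : ∀ i j, u i ⬝ᵥ u j = if i = j then (1 : ℝ) else 0)
    (hl : Antitone l)
    (hgap : l ⟨k, hkp⟩ < l ⟨k - 1, by omega⟩) :
    ∀ X : Matrix (Fin p) (Fin p) ℝ, Fantope k X →
      (1 / 2) * fnorm (topProj k u - X) ^ 2 ≤
        fip Sig (topProj k u - X) / (l ⟨k - 1, by omega⟩ - l ⟨k, hkp⟩) := by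
  intro X hX
  obtain ⟨hXsym, hXpsd, h1Xpsd, hXtr⟩ := hX
  set T : Finset (Fin p) := Finset.univ.filter (fun i : Fin p => (i : ℕ) < k) with hT
  set P : Matrix (Fin p) (Fin p) ℝ := topProj k u with hP
  set x : Fin p → ℝ := fun i => u i ⬝ᵥ X *ᵥ u i with hx
  set lK : ℝ := l ⟨k - 1, by omega⟩ with hlK
  set lK1 : ℝ := l ⟨k, hkp⟩ with hlK1
  have hδ : 0 < lK - lK1 := by simp only [hlK, hlK1]; linarith
  -- x bounds
  have hx0 : ∀ i, 0 ≤ x i := fun i => by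
    have := hXpsd.dotProduct_mulVec_nonneg (u i); simpa [hx] using this
  have hx1 : ∀ i, x i ≤ 1 := fun i => by
    have h : (0:ℝ) ≤ u i ⬝ᵥ ((1 - X) *ᵥ u i) := by simpa using h1Xpsd.dotProduct_mulVec_nonneg (u i)
    rw [Matrix.sub_mulVec, dotProduct_sub, Matrix.one_mulVec, horth i i] at h
    norm_num at h
    simp only [hx]
    linarith
  -- sum of all x equals k
  have hsum_all : ∑ i, x i = (k : ℝ) := by
    have h1 : ((∑ i, vecMulVec (u i) (u i)) * X).trace = ∑ i, x i := by
      rw [Finset.sum_mul, Matrix.trace_sum]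
      exact Finset.sum_congr rfl fun i _ => tr_vvM (u i) X
    rw [complete_sum u horth, Matrix.one_mul, hXtr] at h1
    exact h1.symm
  -- diagonal values of P in u-basis
  have huPu : ∀ i, u i ⬝ᵥ P *ᵥ u i = if (i:ℕ) < k then (1:ℝ) else 0 := by
    intro i
    have h1 : P *ᵥ u i = ∑ j ∈ T, (u j ⬝ᵥ u i) • u j := by
      rw [hP, topProj, ← hT, sum_mulVec']
      exact Finset.sum_congr rfl fun j _ => vvt_mulVec (u j) (u j) (u i)
    rw [h1, dot_sum']
    have h2 : ∀ j ∈ T, u i ⬝ᵥ ((u j ⬝ᵥ u i) • u j) = if j = i then (1:ℝ) else 0 := by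
      intro j _
      rw [dotProduct_smul, horth j i, horth i j, smul_eq_mul]
      by_cases h : j = i <;> simp [h, eq_comm]
    rw [Finset.sum_congr rfl h2, Finset.sum_ite_eq' T i]
    simp [hT]
  -- trace (P * M) for any M
  have htrP : ∀ M : Matrix (Fin p) (Fin p) ℝ, (P * M).trace = ∑ i ∈ T, u i ⬝ᵥ M *ᵥ u i := by
    intro M
    rw [hP, topProj, ← hT, Finset.sum_mul, Matrix.trace_sum]
    exact Finset.sum_congr rfl fun i _ => tr_vvM (u i) M
  have hcard : (T.card : ℝ) = (k : ℝ) := by rw [hT, card_T hkp]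
  have htrPP : (P * P).trace = (k : ℝ) := by
    rw [htrP P]
    have h1 : ∀ i ∈ T, u i ⬝ᵥ P *ᵥ u i = 1 := fun i hi => by
      rw [huPu i, if_pos (by simpa [hT] using hi)]
    rw [Finset.sum_congr rfl h1, Finset.sum_const, nsmul_eq_mul, mul_one, hcard]
  have htrPX : (P * X).trace = ∑ i ∈ T, x i := htrP X
  have hPsym : Pᵀ = P := by
    rw [hP, topProj, Matrix.transpose_sum]
    exact Finset.sum_congr rfl fun i _ => vvt_transpose (u i)
  have hSigsym : Sigᵀ = Sig := by
    rw [hdecomp, Matrix.transpose_sum]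
    exact Finset.sum_congr rfl fun i _ => by rw [Matrix.transpose_smul, vvt_transpose]
  set Δ : Matrix (Fin p) (Fin p) ℝ := P - X with hΔ
  have hΔsym : Δᵀ = Δ := by rw [hΔ, Matrix.transpose_sub, hPsym, hXsym]
  -- fnorm squared
  have hfn : fnorm Δ ^ 2 = (Δᵀ * Δ).trace := by
    unfold fnorm
    refine (Real.sq_sqrt (Finset.sum_nonneg fun i _ => Finset.sum_nonneg fun j _ => sq_nonneg _)).trans ?_
    simp only [Matrix.trace, Matrix.diag, Matrix.mul_apply, Matrix.transpose_apply]
    rw [Finset.sum_comm]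
    exact Finset.sum_congr rfl fun a _ => Finset.sum_congr rfl fun b _ => by ring
  have hfn2 : fnorm Δ ^ 2 = (k : ℝ) - 2 * ∑ i ∈ T, x i + (X * X).trace := by
    rw [hfn, hΔsym, hΔ, Matrix.sub_mul, Matrix.mul_sub, Matrix.mul_sub, Matrix.trace_sub,
      Matrix.trace_sub, Matrix.trace_sub, htrPP, htrPX, Matrix.trace_mul_comm X P, htrPX]
    ring
  have hXXle : (X * X).trace ≤ (k : ℝ) := by
    have := trXX_le hXpsd h1Xpsd
    rwa [hXtr] at this
  set S : ℝ := (k : ℝ) - ∑ i ∈ T, x i with hS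
  have hfnS : fnorm Δ ^ 2 ≤ 2 * S := by rw [hfn2, hS]; linarith
  -- S as sum over complement
  have hsplit := Finset.sum_filter_add_sum_filter_not (Finset.univ : Finset (Fin p))
    (fun i : Fin p => (i : ℕ) < k) x
  have hSc : ∑ i ∈ Finset.univ.filter (fun i : Fin p => ¬ (i:ℕ) < k), x i = S := by
    rw [← hT] at hsplit
    rw [hsum_all] at hsplit
    rw [hS]; linarith
  have hS0 : 0 ≤ S := by
    rw [← hSc]; exact Finset.sum_nonneg fun i _ => hx0 i
  have hsum1 : ∑ i ∈ T, (1 - x i) = S := by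
    rw [Finset.sum_sub_distrib, Finset.sum_const, nsmul_eq_mul, mul_one, hcard, hS]
  -- fip value
  have hfip : fip Sig Δ = ∑ i, l i * ((if (i:ℕ) < k then (1:ℝ) else 0) - x i) := by
    rw [fip, hSigsym, hdecomp, Finset.sum_mul, Matrix.trace_sum]
    refine Finset.sum_congr rfl fun i _ => ?_
    rw [Matrix.smul_mul, Matrix.trace_smul, tr_vvM, smul_eq_mul]
    congr 1
    rw [hΔ, Matrix.sub_mulVec, dotProduct_sub, huPu i]
  -- lower bound on fip
  have hfip_ge : (lK - lK1) * S ≤ fip Sig Δ := by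
    rw [hfip, ← Finset.sum_filter_add_sum_filter_not Finset.univ (fun i : Fin p => (i:ℕ) < k),
      ← hT]
    have hb1 : lK * S ≤ ∑ i ∈ T, l i * ((if (i:ℕ) < k then (1:ℝ) else 0) - x i) := by
      rw [← hsum1, Finset.mul_sum]
      refine Finset.sum_le_sum fun i hi => ?_
      have hik : (i:ℕ) < k := by simpa [hT] using hi
      rw [if_pos hik]
      have hle : lK ≤ l i := by
        apply hl
        rw [Fin.le_def]
        simp only [Fin.val_mk]
        omega
      have h1 := hx1 i
      nlinarith
    have hb2 : -(lK1 * S) ≤ ∑ i ∈ Finset.univ.filter (fun i : Fin p => ¬ (i:ℕ) < k),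
        l i * ((if (i:ℕ) < k then (1:ℝ) else 0) - x i) := by
      rw [← hSc, Finset.mul_sum, ← Finset.sum_neg_distrib]
      refine Finset.sum_le_sum fun i hi => ?_
      have hik : ¬ (i:ℕ) < k := by simpa using hi
      rw [if_neg hik]
      have hle : l i ≤ lK1 := by
        apply hl
        rw [Fin.le_def]
        simp only [Fin.val_mk]
        omega
      have h0 := hx0 i
      nlinarith
    calc (lK - lK1) * S = lK * S + -(lK1 * S) := by ring
    _ ≤ _ := add_le_add hb1 hb2
  rw [le_div_iff₀ hδ]
  have h1 : fnorm Δ ^ 2 * (lK - lK1) ≤ 2 * S * (lK - lK1) :=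
    mul_le_mul_of_nonneg_right hfnS hδ.le
  linarith
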